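/- Let R be a prime ring which is E(R)-semiprime and not a domain. Then R contains a nontrivial idempotent and R is [E(R), R]-prime. -/

import Mathlib

/-- The additive subgroup generated by commutators `a * b - b * a` with `a ∈ A`, `b ∈ B`. -/
def lieBr {R : Type*} [Ring R] (A B : Set R) : AddSubgroup R :=
  AddSubgroup.closure {z : R | ∃ a ∈ A, ∃ b ∈ B, z = a * b - b * a}

/-- For idempotent `e`, `e*x - e*x*e` lies in the subgroup generated by idempotents. -/
lemma aux_mem {R : Type*} [Ring R] (e x : R) (he : IsIdempotentElem e) :
    e * x - e * x * e ∈ AddSubgroup.closure {e : R | IsIdempotentElem e} := by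
  set v := x - x * e with hv
  have hee : e * e = e := he
  have hve : v * e = 0 := by
    rw [hv, sub_mul, mul_assoc, hee, sub_self]
  have hw : e * x - e * x * e = e * v := by rw [hv]; noncomm_ring
  have h1 : (e * v) * e = 0 := by rw [mul_assoc, hve, mul_zero]
  have h2 : (e * v) * (e * v) = 0 := by rw [← mul_assoc, h1, zero_mul]
  have hf : IsIdempotentElem (e + e * v) := by
    show (e + e * v) * (e + e * v) = e + e * v
    rw [mul_add, add_mul, add_mul, hee, h1, h2, ← mul_assoc, hee]
    abel
  have hfE : e + e * v ∈ AddSubgroup.closure {e : R | IsIdempotentElem e} :=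
    AddSubgroup.subset_closure hf
  have heE : e ∈ AddSubgroup.closure {e : R | IsIdempotentElem e} :=
    AddSubgroup.subset_closure he
  have := AddSubgroup.sub_mem _ hfE heE
  simpa [hw] using this

theorem stmt13 {R : Type*} [Ring R]
    (hprime : ∀ a b : R, (∀ x : R, a * x * b = 0) → a = 0 ∨ b = 0)
    (hE : ∀ a : R,
      (∀ x ∈ AddSubgroup.closure {e : R | IsIdempotentElem e}, a * x * a = 0) → a = 0)
    (hnd : ∃ a b : R, a ≠ 0 ∧ b ≠ 0 ∧ a * b = 0) :
    (∃ e : R, IsIdempotentElem e ∧ e ≠ 0 ∧ e ≠ 1) ∧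
    (∀ a b : R,
      (∀ x ∈ lieBr ((AddSubgroup.closure {e : R | IsIdempotentElem e} : AddSubgroup R) : Set R)
        Set.univ, a * x * b = 0) → a = 0 ∨ b = 0) := by
  obtain ⟨p, q, hp, hq, hpq⟩ := hnd
  -- produce c ≠ 0 with c^2 = 0
  have hex : ∃ x : R, q * x * p ≠ 0 := by
    by_contra hcon
    push_neg at hcon
    rcases hprime q p hcon with h | h
    · exact hq h
    · exact hp h
  obtain ⟨x0, hx0⟩ := hex
  set c := q * x0 * p with hc
  have hc2 : c * c = 0 := by
    have : c * c = q * x0 * (p * q) * x0 * p := by rw [hc]; noncomm_ring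
    rw [this, hpq, mul_zero, zero_mul, zero_mul]
  -- nontrivial idempotent exists
  have hidem : ∃ e : R, IsIdempotentElem e ∧ e ≠ 0 ∧ e ≠ 1 := by
    by_contra hcon
    push_neg at hcon
    have : ∀ u ∈ AddSubgroup.closure {e : R | IsIdempotentElem e}, c * u * c = 0 := by
      intro u hu
      induction hu using AddSubgroup.closure_induction with
      | mem z hz =>
        rcases eq_or_ne z 0 with rfl | hz0
        · simp
        · have : z = 1 := by
            by_contra hz1
            exact hz1 ((hcon z hz hz0))
          rw [this, mul_one, hc2]
      | zero => simp
      | add y z _ _ hy hz =>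
        rw [mul_add, add_mul, hy, hz, add_zero]
      | neg y _ hy =>
        rw [mul_neg, neg_mul, hy, neg_zero]
    exact hx0 (hE c this)
  refine ⟨hidem, ?_⟩
  obtain ⟨e, he, he0, he1⟩ := hidem
  intro a b h
  set E := AddSubgroup.closure {e : R | IsIdempotentElem e} with hEdef
  have heE : e ∈ E := AddSubgroup.subset_closure he
  have hee : e * e = e := he
  -- key: for u in E, a*(u*y)*b = a*(y*u)*b
  have key : ∀ u ∈ E, ∀ y : R, a * (u * y) * b = a * (y * u) * b := by
    intro u hu y
    have hz := h _ (AddSubgroup.subset_closure ⟨u, hu, y, Set.mem_univ y, rfl⟩)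
    have : a * (u * y) * b - a * (y * u) * b = 0 := by
      rw [← hz]; noncomm_ring
    exact sub_eq_zero.mp this
  -- Step A : a*e = 0 ∨ b - e*b = 0
  have hA : a * e = 0 ∨ b - e * b = 0 := by
    refine hprime _ _ fun x => ?_
    have hz := h _ (AddSubgroup.subset_closure ⟨e, heE, e * x, Set.mem_univ _, rfl⟩)
    have h1 : e * (e * x) - (e * x) * e = e * x - e * x * e := by rw [← mul_assoc, hee]
    rw [h1] at hz
    calc a * e * x * (b - e * b) = a * (e * x - e * x * e) * b := by noncomm_ring
    _ = 0 := hz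
  -- Step B : a - a*e = 0 ∨ e*b = 0
  have hB : a - a * e = 0 ∨ e * b = 0 := by
    refine hprime _ _ fun x => ?_
    have hz := h _ (AddSubgroup.subset_closure ⟨e, heE, x * e, Set.mem_univ _, rfl⟩)
    have h1 : (x * e) * e = x * e := by rw [mul_assoc, hee]
    rw [h1] at hz
    calc (a - a * e) * x * (e * b) = -(a * (e * (x * e) - x * e) * b) := by noncomm_ring
    _ = 0 := by rw [hz, neg_zero]
  rcases hA with hA | hA <;> rcases hB with hB | hB
  · -- a*e = 0 and a - a*e = 0 ⇒ a = 0
    rw [hA, sub_zero] at hB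
    exact Or.inl hB
  · -- a*e = 0 and e*b = 0
    by_cases ha : a = 0
    · exact Or.inl ha
    right
    have hyb : ∀ y : R, e * (y * b) = 0 := by
      intro y
      have hx : ∀ x : R, a * x * (e * (y * b)) = 0 := by
        intro x
        have hu2 : x * e - e * x * e ∈ E := by
          have hm := aux_mem (1 - e) x he.one_sub
          have heq : (1 - e) * x - (1 - e) * x * (1 - e) = x * e - e * x * e := by noncomm_ring
          rw [heq] at hm
          exact hm
        have hk := key _ hu2 y
        have hrhs : a * (y * (x * e - e * x * e)) * b = 0 := by
          calc a * (y * (x * e - e * x * e)) * b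
              = a * (y * x) * (e * b) - a * (y * (e * x)) * (e * b) := by noncomm_ring
          _ = 0 := by rw [hB, mul_zero, mul_zero, sub_zero]
        have hsplit : a * x * (e * (y * b))
            = a * ((x * e - e * x * e) * y) * b + (a * e) * (x * (e * (y * b))) := by
          noncomm_ring
        rw [hsplit, hk, hrhs, hA, zero_mul, add_zero]
      rcases hprime a (e * (y * b)) hx with h' | h'
      · exact absurd h' ha
      · exact h'
    rcases hprime e b (fun y => by rw [mul_assoc]; exact hyb y) with h' | h'
    · exact absurd h' he0
    · exact h'
  · -- b - e*b = 0 and a - a*e = 0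
    by_cases ha : a = 0
    · exact Or.inl ha
    right
    have hae : a * e = a := (sub_eq_zero.mp hB).symm
    have hyb : ∀ y : R, y * b - e * (y * b) = 0 := by
      intro y
      have hx : ∀ x : R, a * x * (y * b - e * (y * b)) = 0 := by
        intro x
        have hu1 : e * x - e * x * e ∈ E := aux_mem e x he
        have hk := key _ hu1 y
        have hrhs : a * (y * (e * x - e * x * e)) * b = 0 := by
          calc a * (y * (e * x - e * x * e)) * b
              = (a * (y * (e * x))) * (b - e * b) := by noncomm_ring
          _ = 0 := by rw [hA, mul_zero]
        have hsplit : a * x * (y * b - e * (y * b))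
            = a * ((e * x - e * x * e) * y) * b := by
          calc a * x * (y * b - e * (y * b))
              = (a * e) * x * (y * b - e * (y * b)) := by rw [hae]
          _ = a * ((e * x - e * x * e) * y) * b := by noncomm_ring
        rw [hsplit, hk, hrhs]
      rcases hprime a _ hx with h' | h'
      · exact absurd h' ha
      · exact h'
    have h1e : ∀ y : R, (1 - e) * y * b = 0 := by
      intro y
      calc (1 - e) * y * b = y * b - e * (y * b) := by noncomm_ring
      _ = 0 := hyb y
    rcases hprime (1 - e) b h1e with h' | h'
    · exact absurd (sub_eq_zero.mp h').symm he1
    · exact h'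
  · -- b - e*b = 0 and e*b = 0 ⇒ b = 0
    rw [hB, sub_zero] at hA
    exact Or.inr hA
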